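/- If E is Dedekind complete (every nonempty subset of E that is bounded below by an element of E has an infimum in E), then ι(x) = ρ(x) for every x ∈ G, and moreover ρ(y) = ν(y) for every y ∈ E. -/

import Mathlib

theorem stmt1
    {G : Type*} [Lattice G] [AddCommGroup G] [Module ℝ G]
    [CovariantClass G G (· + ·) (· ≤ ·)] [PosSMulMono ℝ G]
    (arch : ∀ x y : G, (∀ n : ℕ, n • x ≤ y) → x ≤ 0)
    (E : Set G)
    (hE0 : (0 : G) ∈ E)
    (hEadd : ∀ x ∈ E, ∀ y ∈ E, x + y ∈ E)
    (hEsmul : ∀ (c : ℝ), ∀ x ∈ E, c • x ∈ E)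
    (hEsup : ∀ x ∈ E, ∀ y ∈ E, x ⊔ y ∈ E)
    (hEinf : ∀ x ∈ E, ∀ y ∈ E, x ⊓ y ∈ E)
    (hdense : ∀ x : G, 0 < x → ∃ y ∈ E, 0 < y ∧ y ≤ x)
    (hmaj : ∀ x : G, ∃ y ∈ E, x ≤ y)
    (ν : G → ℝ)
    (hν_zero : ∀ x ∈ E, (ν x = 0 ↔ x = 0))
    (hν_smul : ∀ (c : ℝ), ∀ x ∈ E, ν (c • x) = |c| * ν x)
    (hν_add : ∀ x ∈ E, ∀ y ∈ E, ν (x + y) ≤ ν x + ν y)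
    (hν_mono : ∀ x ∈ E, ∀ y ∈ E, |x| ≤ |y| → ν x ≤ ν y)
    (ρ : G → ℝ)
    (hρ : ∀ x : G, ρ x = sSup (ν '' {z | z ∈ E ∧ 0 ≤ z ∧ z ≤ |x|}))
    (ι : G → ℝ)
    (hι : ∀ x : G, ι x = sInf (ν '' {y | y ∈ E ∧ |x| ≤ y}))
    (hDC : ∀ A : Set G, A ⊆ E → A.Nonempty → (∃ b ∈ E, ∀ a ∈ A, b ≤ a) →
      ∃ m ∈ E, (∀ a ∈ A, m ≤ a) ∧ ∀ b ∈ E, (∀ a ∈ A, b ≤ a) → b ≤ m) :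
    (∀ x : G, ι x = ρ x) ∧ (∀ y ∈ E, ρ y = ν y) := by
  have hneg : ∀ a b : G, a ≤ b → -b ≤ -a := by
    intro a b h
    calc -b = -a - b + a := by abel
      _ ≤ -a - b + b := add_le_add_right h _
      _ = -a := by abel
  have hEneg : ∀ x ∈ E, -x ∈ E := by
    intro x hx
    have := hEsmul (-1) x hx
    rwa [neg_one_smul] at this
  -- Lemma A: x = sup of elements of E below x, for 0 ≤ x
  have lemA : ∀ x u : G, 0 ≤ x → (∀ z, z ∈ E → 0 ≤ z → z ≤ x → z ≤ u) → x ≤ u := by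
    intro x u hx hub
    have hu0 : (0 : G) ≤ u := hub 0 hE0 le_rfl hx
    have hinf0 : (0 : G) ≤ x ⊓ u := le_inf hx hu0
    have hd0 : 0 ≤ x - x ⊓ u := sub_nonneg.2 inf_le_left
    have hdle : ¬ 0 < x - x ⊓ u := by
      intro hpos
      obtain ⟨z, hzE, hz0, hzd⟩ := hdense _ hpos
      have key : ∀ n : ℕ, n • z ∈ E ∧ 0 ≤ n • z ∧ n • z ≤ x ⊓ u := by
        intro n
        induction n with
        | zero =>
          simp only [zero_smul]
          exact ⟨hE0, le_rfl, hinf0⟩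
        | succ n ih =>
          obtain ⟨h1, h2, h3⟩ := ih
          have hmem : (n + 1) • z ∈ E := by
            rw [succ_nsmul]; exact hEadd _ h1 _ hzE
          have hnn : 0 ≤ (n + 1) • z := by
            rw [succ_nsmul]; exact add_nonneg h2 hz0.le
          have hlex : (n + 1) • z ≤ x := by
            rw [succ_nsmul]
            calc n • z + z ≤ x ⊓ u + (x - x ⊓ u) := add_le_add h3 hzd
              _ = x := by abel
          have hleu : (n + 1) • z ≤ u := hub _ hmem hnn hlex
          exact ⟨hmem, hnn, le_inf hlex hleu⟩
      have : z ≤ 0 := arch z x (fun n => (key n).2.2.trans inf_le_left)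
      exact absurd this hz0.not_ge
    have hdz : x - x ⊓ u = 0 := by
      by_contra h
      exact hdle (hd0.lt_of_ne (Ne.symm h))
    have : x = x ⊓ u := by
      have := sub_eq_zero.1 hdz
      exact this
    calc x = x ⊓ u := this
      _ ≤ u := inf_le_right
  -- Lemma B: E is an ideal: 0 ≤ x ≤ e with e ∈ E implies x ∈ E
  have lemB : ∀ x : G, 0 ≤ x → (∃ e ∈ E, x ≤ e) → x ∈ E := by
    intro x hx ⟨e, heE, hxe⟩
    set A' : Set G := {w : G | ∃ z, (z ∈ E ∧ 0 ≤ z ∧ z ≤ x) ∧ w = -z} with hA'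
    have hsub : A' ⊆ E := by
      rintro w ⟨z, ⟨hzE, _, _⟩, rfl⟩
      exact hEneg z hzE
    have hne : A'.Nonempty := ⟨0, 0, ⟨hE0, le_rfl, hx⟩, by simp⟩
    have hbdd : ∃ b ∈ E, ∀ a ∈ A', b ≤ a := by
      refine ⟨-e, hEneg e heE, ?_⟩
      rintro w ⟨z, ⟨_, _, hzx⟩, rfl⟩
      exact hneg _ _ (hzx.trans hxe)
    obtain ⟨m, hmE, hmlb, hmax⟩ := hDC A' hsub hne hbdd
    have hsE : -m ∈ E := hEneg m hmE
    have hub : ∀ z, z ∈ E → 0 ≤ z → z ≤ x → z ≤ -m := by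
      intro z hzE hz0 hzx
      have : m ≤ -z := hmlb (-z) ⟨z, ⟨hzE, hz0, hzx⟩, rfl⟩
      have := hneg _ _ this
      rwa [neg_neg] at this
    have hxs : x ≤ -m := lemA x (-m) hx hub
    have hnotpos : ¬ 0 < -m - x := by
      intro hpos
      obtain ⟨w, hwE, hw0, hwle⟩ := hdense _ hpos
      have hswE : -m + -w ∈ E := hEadd _ hsE _ (hEneg w hwE)
      have hxsw : x ≤ -m + -w := by
        have := add_le_add_left hwle x
        have h2 : x + w ≤ -m := by
          calc x + w ≤ x + (-m - x) := add_le_add_right hwle x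
            _ = -m := by abel
        calc x = x + w + -w := by abel
          _ ≤ -m + -w := add_le_add_left h2 _
      have hubE : ∀ a ∈ A', -(-m + -w) ≤ a := by
        rintro a ⟨z, ⟨hzE, hz0, hzx⟩, rfl⟩
        exact hneg _ _ (hzx.trans hxsw)
      have : -(-m + -w) ≤ m := hmax _ (hEneg _ hswE) hubE
      have h3 : -m ≤ -m + -w := by
        have := hneg _ _ this
        rwa [neg_neg] at this
      have : (0 : G) ≤ -w := by
        have := add_le_add_left h3 m
        simpa using this
      have : w ≤ 0 := by simpa using hneg _ _ this
      exact absurd this hw0.not_ge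
    have : -m - x = 0 := by
      by_contra h
      exact hnotpos ((sub_nonneg.2 hxs).lt_of_ne (Ne.symm h))
    have hxm : x = -m := (sub_eq_zero.1 this).symm
    rw [hxm]; exact hsE
  -- key: |x| ∈ E for all x
  have habsE : ∀ x : G, |x| ∈ E := by
    intro x
    obtain ⟨y1, hy1E, hy1⟩ := hmaj x
    obtain ⟨y2, hy2E, hy2⟩ := hmaj (-x)
    have hle : |x| ≤ y1 ⊔ y2 :=
      sup_le (hy1.trans le_sup_left) (hy2.trans le_sup_right)
    exact lemB _ (abs_nonneg x) ⟨y1 ⊔ y2, hEsup _ hy1E _ hy2E, hle⟩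
  -- both ι and ρ equal ν ∘ |·|
  have hιval : ∀ x : G, ι x = ν |x| := by
    intro x
    rw [hι]
    have hmem : ν |x| ∈ ν '' {y | y ∈ E ∧ |x| ≤ y} := ⟨|x|, ⟨habsE x, le_rfl⟩, rfl⟩
    have hlb : ∀ r ∈ ν '' {y | y ∈ E ∧ |x| ≤ y}, ν |x| ≤ r := by
      rintro r ⟨y, ⟨hyE, hxy⟩, rfl⟩
      exact hν_mono _ (habsE x) _ hyE (by rw [abs_abs]; exact hxy.trans (le_abs_self y))
    exact le_antisymm (csInf_le ⟨ν |x|, hlb⟩ hmem) (le_csInf ⟨_, hmem⟩ hlb)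
  have hρval : ∀ x : G, ρ x = ν |x| := by
    intro x
    rw [hρ]
    have hmem : ν |x| ∈ ν '' {z | z ∈ E ∧ 0 ≤ z ∧ z ≤ |x|} :=
      ⟨|x|, ⟨habsE x, abs_nonneg x, le_rfl⟩, rfl⟩
    have hub : ∀ r ∈ ν '' {z | z ∈ E ∧ 0 ≤ z ∧ z ≤ |x|}, r ≤ ν |x| := by
      rintro r ⟨z, ⟨hzE, hz0, hzx⟩, rfl⟩
      exact hν_mono _ hzE _ (habsE x) (by rw [abs_of_nonneg hz0, abs_abs]; exact hzx)
    exact le_antisymm (csSup_le ⟨_, hmem⟩ hub) (le_csSup ⟨ν |x|, hub⟩ hmem)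
  constructor
  · intro x; rw [hιval, hρval]
  · intro y hyE
    rw [hρval]
    exact le_antisymm
      (hν_mono _ (habsE y) _ hyE (by rw [abs_abs]))
      (hν_mono _ hyE _ (habsE y) (by rw [abs_abs]))
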